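/- For the complete graph K_n with n ≥ 2 vertices, L⊠_E(K_n)=L×_E(K_n)=(n²−n+2)/2 if n is odd and =n²/2 if n is even, and L□_E(K_n)=n²−n+1 if n is odd and =n²−1 if n is even. -/

import Mathlib

open SimpleGraph

/-- An `l`-track on `G`: a surjective function whose consecutive values are adjacent. -/
def IsTrack {V : Type*} (G : SimpleGraph V) {l : ℕ} (f : Fin l → V) : Prop :=
  Function.Surjective f ∧
    ∀ i : ℕ, ∀ hi : i + 1 < l, G.Adj (f ⟨i, Nat.lt_of_succ_lt hi⟩) (f ⟨i + 1, hi⟩)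

/-- A lazy `l`-track on `G`: consecutive values are adjacent or equal. -/
def IsLazyTrack {V : Type*} (G : SimpleGraph V) {l : ℕ} (f : Fin l → V) : Prop :=
  Function.Surjective f ∧
    ∀ i : ℕ, ∀ hi : i + 1 < l,
      G.Adj (f ⟨i, Nat.lt_of_succ_lt hi⟩) (f ⟨i + 1, hi⟩) ∨
        f ⟨i, Nat.lt_of_succ_lt hi⟩ = f ⟨i + 1, hi⟩

/-- The condition that every edge of `G` is traversed by `f`. -/
def SweepCond {V : Type*} (G : SimpleGraph V) {l : ℕ} (f : Fin l → V) : Prop :=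
  ∀ e ∈ G.edgeSet, ∃ i : ℕ, ∃ hi : i + 1 < l,
    e = s(f ⟨i, Nat.lt_of_succ_lt hi⟩, f ⟨i + 1, hi⟩)

/-- An `l`-sweep on `G`: an `l`-track traversing every edge. -/
def IsSweep {V : Type*} (G : SimpleGraph V) {l : ℕ} (f : Fin l → V) : Prop :=
  IsTrack G f ∧ SweepCond G f

/-- A lazy `l`-sweep on `G`: a lazy `l`-track traversing every edge. -/
def IsLazySweep {V : Type*} (G : SimpleGraph V) {l : ℕ} (f : Fin l → V) : Prop :=
  IsLazyTrack G f ∧ SweepCond G f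

/-- `f` and `g` are opposite: at each step exactly `f` moves iff `g` stays. -/
def IsOpposite {V : Type*} (G : SimpleGraph V) {l : ℕ} (f g : Fin l → V) : Prop :=
  ∀ i : ℕ, ∀ hi : i + 1 < l,
    (G.Adj (f ⟨i, Nat.lt_of_succ_lt hi⟩) (f ⟨i + 1, hi⟩) ↔
      g ⟨i, Nat.lt_of_succ_lt hi⟩ = g ⟨i + 1, hi⟩)

/-- The distance `m_G(f,g)`: minimal distance between simultaneous positions. -/
noncomputable def mDist {V : Type*} (G : SimpleGraph V) {l : ℕ} (f g : Fin l → V) : ℕ :=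
  sInf {d | ∃ i : Fin l, G.dist (f i) (g i) = d}

/-- Strong vertex span `σ⊠_V(G)`. -/
noncomputable def strongVertexSpan {V : Type*} (G : SimpleGraph V) : ℕ :=
  sSup {d | ∃ (l : ℕ) (f g : Fin l → V), IsLazyTrack G f ∧ IsLazyTrack G g ∧ mDist G f g = d}

/-- Direct vertex span `σ×_V(G)`. -/
noncomputable def directVertexSpan {V : Type*} (G : SimpleGraph V) : ℕ :=
  sSup {d | ∃ (l : ℕ) (f g : Fin l → V), IsTrack G f ∧ IsTrack G g ∧ mDist G f g = d}

/-- Cartesian vertex span `σ□_V(G)`. -/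
noncomputable def cartesianVertexSpan {V : Type*} (G : SimpleGraph V) : ℕ :=
  sSup {d | ∃ (l : ℕ) (f g : Fin l → V),
    IsLazyTrack G f ∧ IsLazyTrack G g ∧ IsOpposite G f g ∧ mDist G f g = d}

/-- Strong edge span `σ⊠_E(G)`. -/
noncomputable def strongEdgeSpan {V : Type*} (G : SimpleGraph V) : ℕ :=
  sSup {d | ∃ (l : ℕ) (f g : Fin l → V), IsLazySweep G f ∧ IsLazySweep G g ∧ mDist G f g = d}

/-- Direct edge span `σ×_E(G)`. -/
noncomputable def directEdgeSpan {V : Type*} (G : SimpleGraph V) : ℕ :=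
  sSup {d | ∃ (l : ℕ) (f g : Fin l → V), IsSweep G f ∧ IsSweep G g ∧ mDist G f g = d}

/-- Cartesian edge span `σ□_E(G)`. -/
noncomputable def cartesianEdgeSpan {V : Type*} (G : SimpleGraph V) : ℕ :=
  sSup {d | ∃ (l : ℕ) (f g : Fin l → V),
    IsLazySweep G f ∧ IsLazySweep G g ∧ IsOpposite G f g ∧ mDist G f g = d}

/-- `L⊠_V(G)`: minimal length of lazy tracks realizing the strong vertex span. -/
noncomputable def strongVertexL {V : Type*} (G : SimpleGraph V) : ℕ :=
  sInf {l | ∃ f g : Fin l → V,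
    IsLazyTrack G f ∧ IsLazyTrack G g ∧ mDist G f g = strongVertexSpan G}

/-- `L×_V(G)`. -/
noncomputable def directVertexL {V : Type*} (G : SimpleGraph V) : ℕ :=
  sInf {l | ∃ f g : Fin l → V,
    IsTrack G f ∧ IsTrack G g ∧ mDist G f g = directVertexSpan G}

/-- `L□_V(G)`. -/
noncomputable def cartesianVertexL {V : Type*} (G : SimpleGraph V) : ℕ :=
  sInf {l | ∃ f g : Fin l → V,
    IsLazyTrack G f ∧ IsLazyTrack G g ∧ IsOpposite G f g ∧ mDist G f g = cartesianVertexSpan G}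

/-- `L⊠_E(G)`. -/
noncomputable def strongEdgeL {V : Type*} (G : SimpleGraph V) : ℕ :=
  sInf {l | ∃ f g : Fin l → V,
    IsLazySweep G f ∧ IsLazySweep G g ∧ mDist G f g = strongEdgeSpan G}

/-- `L×_E(G)`. -/
noncomputable def directEdgeL {V : Type*} (G : SimpleGraph V) : ℕ :=
  sInf {l | ∃ f g : Fin l → V,
    IsSweep G f ∧ IsSweep G g ∧ mDist G f g = directEdgeSpan G}

/-- `L□_E(G)`. -/
noncomputable def cartesianEdgeL {V : Type*} (G : SimpleGraph V) : ℕ :=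
  sInf {l | ∃ f g : Fin l → V,
    IsLazySweep G f ∧ IsLazySweep G g ∧ IsOpposite G f g ∧ mDist G f g = cartesianEdgeSpan G}


namespace SpanAux
open Finset List


/-- concatenation of chunks `F 0 ++ F 1 ++ ... ++ F (m-1)` -/
def chunks (F : ℕ → List ℕ) : ℕ → List ℕ
  | 0 => []
  | m + 1 => chunks F m ++ F m

lemma chunks_infix (F : ℕ → List ℕ) {j m : ℕ} (h : j < m) : F j <:+: chunks F m := by
  induction m with
  | zero => omega
  | succ m ih =>
    rcases Nat.lt_succ_iff_lt_or_eq.1 h with h | h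
    · exact (ih h).trans ((List.prefix_append _ _).isInfix)
    · subst h; exact (List.suffix_append _ _).isInfix

lemma chunks_cons (F : ℕ → List ℕ) (c : ℕ) {m : ℕ}
    (h : ∀ j < m, ∃ t, F j = c :: t) :
    ∀ X : List ℕ, ∃ Y, chunks F m ++ c :: X = c :: Y := by
  induction m with
  | zero => exact fun X => ⟨X, rfl⟩
  | succ m ih =>
    intro X
    obtain ⟨t, ht⟩ := h m (by omega)
    have : chunks F (m+1) ++ c :: X = chunks F m ++ c :: (t ++ c :: X) := by
      simp [chunks, ht]
    rw [this]
    exact ih (fun j hj => h j (by omega)) _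

lemma chunks_junction (F : ℕ → List ℕ) (c : ℕ) (e : ℕ → ℕ) {m : ℕ}
    (h1 : ∀ j < m, ∃ t, F j = c :: t)
    (h2 : ∀ j < m, ∃ s, F j = s ++ [e j]) :
    ∀ X : List ℕ, ∀ j < m, [e j, c] <:+: chunks F m ++ c :: X := by
  induction m with
  | zero => omega
  | succ m ih =>
    intro X j hj
    rcases Nat.lt_succ_iff_lt_or_eq.1 hj with h | h
    · obtain ⟨t, ht⟩ := h1 m (by omega)
      have : chunks F (m+1) ++ c :: X = chunks F m ++ c :: (t ++ c :: X) := by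
        simp [chunks, ht]
      rw [this]
      exact ih (fun j hj => h1 j (by omega)) (fun j hj => h2 j (by omega)) _ j h
    · subst h
      obtain ⟨s, hs⟩ := h2 j (by omega)
      refine ⟨chunks F j ++ s, X, ?_⟩
      simp [chunks, hs]

lemma chunks_chain (F : ℕ → List ℕ) (c : ℕ) {m : ℕ}
    (h1 : ∀ j < m, ∃ t, F j = c :: t)
    (hch : ∀ j < m, List.Chain' (· ≠ ·) (F j))
    (hlast : ∀ j < m, ∀ x, (F j).getLast? = some x → x ≠ c) :
    ∀ X : List ℕ, List.Chain' (· ≠ ·) (c :: X) →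
      List.Chain' (· ≠ ·) (chunks F m ++ c :: X) := by
  induction m with
  | zero => intro X hX; exact hX
  | succ m ih =>
    intro X hX
    obtain ⟨t, ht⟩ := h1 m (by omega)
    have he : chunks F (m+1) ++ c :: X = chunks F m ++ c :: (t ++ c :: X) := by
      simp [chunks, ht]
    rw [he]
    refine ih (fun j hj => h1 j (by omega)) (fun j hj => hch j (by omega))
      (fun j hj => hlast j (by omega)) _ ?_
    have : (c :: (t ++ c :: X)) = (c :: t) ++ c :: X := by simp
    rw [this, List.Chain', List.isChain_append]
    refine ⟨ht ▸ hch m (by omega), hX, ?_⟩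
    intro x hx y hy
    simp at hy
    subst hy
    exact hlast m (by omega) x (by rw [ht]; exact Option.mem_def.mp hx)

lemma chunks_mem (F : ℕ → List ℕ) {m : ℕ} {x : ℕ} (h : x ∈ chunks F m) :
    ∃ j < m, x ∈ F j := by
  induction m with
  | zero => simp [chunks] at h
  | succ m ih =>
    simp [chunks] at h
    rcases h with h | h
    · obtain ⟨j, hj, hx⟩ := ih h; exact ⟨j, by omega, hx⟩
    · exact ⟨m, by omega, h⟩

lemma chunks_length (F : ℕ → List ℕ) (k : ℕ) {m : ℕ} (h : ∀ j < m, (F j).length = k) :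
    (chunks F m).length = k * m := by
  induction m with
  | zero => simp [chunks]
  | succ m ih =>
    simp [chunks, ih (fun j hj => h j (by omega)), h m (by omega)]
    ring

lemma infix_left {l A : List ℕ} (B : List ℕ) (h : l <:+: A) : l <:+: A ++ B :=
  h.trans (List.prefix_append A B).isInfix

lemma infix_right (A : List ℕ) {l B : List ℕ} (h : l <:+: B) : l <:+: A ++ B :=
  h.trans (List.suffix_append A B).isInfix

/-- chunk for the Eulerian circuit construction -/
def EulC (m j : ℕ) : List ℕ := [2*m+2, 2*j+1, 2*m+1, 2*j+2]

/-- Eulerian circuit of `K_{2m+1}` starting and ending at `0`. -/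
def Eul : ℕ → List ℕ
  | 0 => [0]
  | m + 1 => Eul m ++ (chunks (EulC m) m ++ (2*m+2) :: [2*m+1, 0])

lemma Eul_ends (m : ℕ) : ∃ P, Eul m = P ++ [0] := by
  cases m with
  | zero => exact ⟨[], rfl⟩
  | succ m =>
    refine ⟨Eul m ++ (chunks (EulC m) m ++ [2*m+2, 2*m+1]), ?_⟩
    simp [Eul]

lemma Eul_getLast (m : ℕ) : (Eul m).getLast? = some 0 := by
  obtain ⟨P, hP⟩ := Eul_ends m
  rw [hP]
  simp

lemma Eul_length (m : ℕ) : (Eul m).length = m * (2*m+1) + 1 := by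
  induction m with
  | zero => rfl
  | succ m ih =>
    have hc : (chunks (EulC m) m).length = 4 * m :=
      chunks_length _ 4 (fun j _ => rfl)
    simp [Eul, ih, hc]
    ring

lemma Eul_bound (m : ℕ) : ∀ x ∈ Eul m, x < 2*m+1 := by
  induction m with
  | zero => intro x hx; simp [Eul] at hx; omega
  | succ m ih =>
    intro x hx
    simp [Eul] at hx
    rcases hx with hx | hx | hx | hx | hx
    · have := ih x hx; omega
    · obtain ⟨j, hj, hxj⟩ := chunks_mem _ hx
      simp [EulC] at hxj
      omega
    all_goals omega

lemma EulC_cons (m : ℕ) : ∀ j < m, ∃ t, EulC m j = (2*m+2) :: t :=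
  fun j _ => ⟨_, rfl⟩

lemma EulC_snoc (m : ℕ) : ∀ j < m, ∃ s, EulC m j = s ++ [2*j+2] :=
  fun j _ => ⟨[2*m+2, 2*j+1, 2*m+1], rfl⟩

lemma Eul_chain (m : ℕ) : List.Chain' (· ≠ ·) (Eul m) := by
  induction m with
  | zero => simp [Eul, List.Chain']
  | succ m ih =>
    rw [Eul, List.Chain', List.isChain_append]
    refine ⟨ih, ?_, ?_⟩
    · refine chunks_chain _ _ (EulC_cons m) ?_ ?_ _ ?_
      · intro j hj
        simp [EulC]
        exact List.isChain_cons_cons.mpr ⟨by omega, List.isChain_cons_cons.mpr ⟨by omega,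
          List.isChain_cons_cons.mpr ⟨by omega, List.isChain_singleton _⟩⟩⟩
      · intro j hj x hx
        simp [EulC] at hx
        omega
      · refine List.isChain_cons_cons.mpr ⟨by omega, List.isChain_cons_cons.mpr ⟨by omega, List.isChain_singleton _⟩⟩
    · intro x hx y hy
      rw [Eul_getLast m] at hx
      simp at hx
      subst hx
      obtain ⟨Y, hY⟩ := chunks_cons (EulC m) (2*m+2) (EulC_cons m) [2*m+1, 0]
      rw [hY] at hy
      simp at hy
      omega

lemma Eul_cov (m : ℕ) : ∀ u v, u < v → v < 2*m+1 →
    [u, v] <:+: Eul m ∨ [v, u] <:+: Eul m := by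
  induction m with
  | zero => intro u v h1 h2; omega
  | succ m ih =>
    intro u v h1 h2
    rcases lt_trichotomy v (2*m+1) with hv | hv | hv
    · rcases ih u v h1 hv with h | h
      · exact Or.inl (infix_left _ h)
      · exact Or.inr (infix_left _ h)
    · -- v = 2m+1
      subst hv
      rcases Nat.eq_zero_or_pos u with hu | hu
      · subst hu
        refine Or.inr ⟨Eul m ++ (chunks (EulC m) m ++ [2*m+2]), [], ?_⟩
        simp [Eul]
      · rcases Nat.even_or_odd u with ⟨j, hj⟩ | ⟨j, hj⟩
        · -- u = 2j = 2(j-1)+2, j ≥ 1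
          have hj1 : 1 ≤ j := by omega
          have hlt : j - 1 < m := by omega
          refine Or.inr (infix_right (Eul m) (infix_left _
            ((?_ : [2*m+1, u] <:+: EulC m (j-1)).trans (chunks_infix _ hlt))))
          refine ⟨[2*m+2, 2*(j-1)+1], [], ?_⟩
          simp [EulC]
          omega
        · have hlt : j < m := by omega
          refine Or.inl (infix_right (Eul m) (infix_left _
            ((?_ : [u, 2*m+1] <:+: EulC m j).trans (chunks_infix _ hlt))))
          refine ⟨[2*m+2], [2*j+2], ?_⟩
          simp [EulC]
          omega
    · -- v = 2m+2
      have hv2 : v = 2*m+2 := by omega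
      subst hv2
      rcases Nat.eq_zero_or_pos u with hu | hu
      · subst hu
        obtain ⟨P, hP⟩ := Eul_ends m
        obtain ⟨Y, hY⟩ := chunks_cons (EulC m) (2*m+2) (EulC_cons m) [2*m+1, 0]
        refine Or.inl ⟨P, Y, ?_⟩
        rw [Eul, hP, hY]
        simp
      · rcases Nat.lt_or_ge u (2*m+1) with hu1 | hu1
        · rcases Nat.even_or_odd u with ⟨j, hj⟩ | ⟨j, hj⟩
          · -- u = 2(j-1)+2: junction chunk
            have hj1 : 1 ≤ j := by omega
            have hlt : j - 1 < m := by omega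
            have := chunks_junction (EulC m) (2*m+2) (fun j => 2*j+2)
              (EulC_cons m) (EulC_snoc m) [2*m+1, 0] (j-1) hlt
            have hu' : u = 2*(j-1)+2 := by omega
            exact Or.inl (infix_right (Eul m) (by simpa [hu'] using this))
          · have hlt : j < m := by omega
            refine Or.inr (infix_right (Eul m) (infix_left _
              ((?_ : [2*m+2, u] <:+: EulC m j).trans (chunks_infix _ hlt))))
            refine ⟨[], [2*m+1, 2*j+2], ?_⟩
            simp [EulC]
            omega
        · -- u = 2m+1
          have hu' : u = 2*m+1 := by omega
          subst hu'
          exact Or.inr ⟨Eul m ++ chunks (EulC m) m, [0], by simp [Eul]⟩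

/-- chunk for the even covering walk -/
def WevC (m k : ℕ) : List ℕ := [2*m+1, 2*k+1, 2*k+2]

/-- covering walk of `K_{2m+2}` of length `2(m+1)^2`. -/
def Wev (m : ℕ) : List ℕ := Eul m ++ (chunks (WevC m) m ++ (2*m+1) :: [])

lemma WevC_cons (m : ℕ) : ∀ j < m, ∃ t, WevC m j = (2*m+1) :: t :=
  fun j _ => ⟨_, rfl⟩

lemma WevC_snoc (m : ℕ) : ∀ j < m, ∃ s, WevC m j = s ++ [2*j+2] :=
  fun j _ => ⟨[2*m+1, 2*j+1], rfl⟩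

lemma Wev_length (m : ℕ) : (Wev m).length = 2 * (m+1)^2 := by
  have hc : (chunks (WevC m) m).length = 3 * m := chunks_length _ 3 (fun j _ => rfl)
  simp [Wev, Eul_length, hc]
  ring

lemma Wev_bound (m : ℕ) : ∀ x ∈ Wev m, x < 2*m+2 := by
  intro x hx
  simp [Wev] at hx
  rcases hx with hx | hx | hx
  · have := Eul_bound m x hx; omega
  · obtain ⟨j, hj, hxj⟩ := chunks_mem _ hx
    simp [WevC] at hxj
    omega
  · omega

lemma Wev_chain (m : ℕ) : List.Chain' (· ≠ ·) (Wev m) := by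
  rw [Wev, List.Chain', List.isChain_append]
  refine ⟨Eul_chain m, ?_, ?_⟩
  · refine chunks_chain _ _ (WevC_cons m) ?_ ?_ _ (List.isChain_singleton _)
    · intro j hj
      refine List.isChain_cons_cons.mpr ⟨by omega, List.isChain_cons_cons.mpr ⟨by omega,
        List.isChain_singleton _⟩⟩
    · intro j hj x hx
      simp [WevC] at hx
      omega
  · intro x hx y hy
    rw [Eul_getLast m] at hx
    simp at hx
    subst hx
    obtain ⟨Y, hY⟩ := chunks_cons (WevC m) (2*m+1) (WevC_cons m) []
    rw [hY] at hy
    simp at hy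
    omega

lemma Wev_cov (m : ℕ) : ∀ u v, u < v → v < 2*m+2 →
    [u, v] <:+: Wev m ∨ [v, u] <:+: Wev m := by
  intro u v h1 h2
  rcases lt_trichotomy v (2*m+1) with hv | hv | hv
  · rcases Eul_cov m u v h1 hv with h | h
    · exact Or.inl (infix_left _ h)
    · exact Or.inr (infix_left _ h)
  · subst hv
    rcases Nat.eq_zero_or_pos u with hu | hu
    · subst hu
      obtain ⟨P, hP⟩ := Eul_ends m
      obtain ⟨Y, hY⟩ := chunks_cons (WevC m) (2*m+1) (WevC_cons m) []
      refine Or.inl ⟨P, Y, ?_⟩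
      rw [Wev, hP, hY]
      simp
    · rcases Nat.even_or_odd u with ⟨j, hj⟩ | ⟨j, hj⟩
      · have hj1 : 1 ≤ j := by omega
        have hlt : j - 1 < m := by omega
        have := chunks_junction (WevC m) (2*m+1) (fun j => 2*j+2)
          (WevC_cons m) (WevC_snoc m) [] (j-1) hlt
        have hu' : u = 2*(j-1)+2 := by omega
        exact Or.inl (infix_right (Eul m) (by simpa [hu'] using this))
      · have hlt : j < m := by omega
        refine Or.inr (infix_right (Eul m) (infix_left _
          ((?_ : [2*m+1, u] <:+: WevC m j).trans (chunks_infix _ hlt))))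
        refine ⟨[], [2*j+2], ?_⟩
        simp [WevC]
        omega
  · omega


lemma count1 {n m : ℕ} (F : ℕ → Fin n)
    (hcov : ∀ u v : Fin n, u ≠ v → ∃ i, i < m ∧ s(u,v) = s(F i, F (i+1))) :
    n.choose 2 ≤ ((Finset.range m).filter (fun i => F i ≠ F (i+1))).card := by
  classical
  have hcard : (⊤ : SimpleGraph (Fin n)).edgeFinset.card = n.choose 2 := by
    rw [SimpleGraph.card_edgeFinset_top_eq_card_choose_two]; simp
  rw [← hcard]
  have hchoice : ∀ e ∈ (⊤ : SimpleGraph (Fin n)).edgeFinset,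
      ∃ i, i < m ∧ e = s(F i, F (i+1)) := by
    intro e he
    induction e with
    | _ u v =>
      rw [SimpleGraph.mem_edgeFinset, SimpleGraph.mem_edgeSet, SimpleGraph.top_adj] at he
      exact hcov u v he
  apply Finset.card_le_card_of_injOn
    (fun e => if h : ∃ i, i < m ∧ e = s(F i, F (i+1)) then h.choose else 0)
  · intro e he
    simp only [dif_pos (hchoice e he)]
    obtain ⟨h1, h2⟩ := (hchoice e he).choose_spec
    simp only [Finset.mem_coe, Finset.mem_filter, Finset.mem_range]
    refine ⟨h1, fun heq => ?_⟩
    have hnd := SimpleGraph.not_isDiag_of_mem_edgeSet _ (SimpleGraph.mem_edgeFinset.mp he)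
    rw [h2] at hnd
    exact hnd (Sym2.mk_isDiag_iff.mpr heq)
  · intro e1 h1 e2 h2 heq
    simp only [dif_pos (hchoice e1 h1), dif_pos (hchoice e2 h2)] at heq
    have s1 := (hchoice e1 h1).choose_spec.2
    have s2 := (hchoice e2 h2).choose_spec.2
    rw [s1, s2, heq]

lemma count2 {n m : ℕ} (hn : 2 ≤ n) (hev : Even n) (F : ℕ → Fin n)
    (hcov : ∀ u v : Fin n, u ≠ v → ∃ i, i < m ∧ s(u,v) = s(F i, F (i+1))) :
    n * n ≤ 2 * ((Finset.range m).filter (fun i => F i ≠ F (i+1))).card + 2 := by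
  classical
  set Mv := (Finset.range m).filter (fun i => F i ≠ F (i+1)) with hMv
  set I : Fin n → Finset ℕ :=
    fun v => (Finset.range m).filter (fun i => F i ≠ F (i+1) ∧ (F i = v ∨ F (i+1) = v)) with hI
  have hsum : ∑ v : Fin n, (I v).card = 2 * Mv.card := by
    have h1 : ∀ v : Fin n, (I v).card
        = ∑ i ∈ Finset.range m, if (F i ≠ F (i+1) ∧ (F i = v ∨ F (i+1) = v)) then 1 else 0 :=
      fun v => by rw [Finset.card_filter]
    simp only [h1]
    rw [Finset.sum_comm]
    have h2 : ∀ i ∈ Finset.range m,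
        (∑ v : Fin n, if (F i ≠ F (i+1) ∧ (F i = v ∨ F (i+1) = v)) then 1 else 0)
        = if F i ≠ F (i+1) then 2 else 0 := by
      intro i _
      by_cases h : F i = F (i+1)
      · simp [h]
      · simp only [h, not_false_iff, if_true, Ne, and_true, true_and]
        have hset : (Finset.univ.filter (fun v => F i = v ∨ F (i+1) = v)) = {F i, F (i+1)} := by
          ext w
          simp [eq_comm, or_comm]
        calc (∑ v : Fin n, if (F i = v ∨ F (i+1) = v) then 1 else 0)
            = (Finset.univ.filter (fun v => F i = v ∨ F (i+1) = v)).card := by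
              rw [Finset.card_filter]
          _ = 2 := by rw [hset]; exact Finset.card_pair h
    rw [Finset.sum_congr rfl h2]
    rw [Finset.sum_ite, Finset.sum_const, Finset.sum_const]
    simp [hMv, mul_comm]
  have hlb : ∀ v : Fin n, n - 1 ≤ (I v).card := by
    intro v
    have hcarde : (Finset.univ.erase v).card = n - 1 := by
      rw [Finset.card_erase_of_mem (Finset.mem_univ v)]
      simp
    rw [← hcarde]
    apply Finset.card_le_card_of_injOn
      (fun w => if h : ∃ i, i < m ∧ s(v,w) = s(F i, F (i+1)) then h.choose else 0)
    · intro w hw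
      have hvw : v ≠ w := fun h => (Finset.mem_erase.mp hw).1 h.symm
      have hex := hcov v w hvw
      simp only [dif_pos hex]
      obtain ⟨hi, heq⟩ := hex.choose_spec
      simp only [hI, Finset.mem_coe, Finset.mem_filter, Finset.mem_range]
      refine ⟨hi, ?_⟩
      rw [Sym2.eq_iff] at heq
      rcases heq with ⟨h1, h2⟩ | ⟨h1, h2⟩
      · exact ⟨by rw [← h1, ← h2]; exact hvw, Or.inl h1.symm⟩
      · exact ⟨by rw [← h1, ← h2]; exact hvw.symm, Or.inr h1.symm⟩
    · intro w1 hw1 w2 hw2 heq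
      have h1 : v ≠ w1 := fun h => (Finset.mem_erase.mp hw1).1 h.symm
      have h2 : v ≠ w2 := fun h => (Finset.mem_erase.mp hw2).1 h.symm
      simp only [dif_pos (hcov v w1 h1), dif_pos (hcov v w2 h2)] at heq
      have s1 := (hcov v w1 h1).choose_spec.2
      have s2 := (hcov v w2 h2).choose_spec.2
      rw [heq] at s1
      exact Sym2.congr_right.mp (s1.trans s2.symm)
  have hpar : ∀ v : Fin n, F 0 ≠ v → F m ≠ v → Even (I v).card := by
    intro v h0 hm
    set A := (Finset.range m).filter (fun i => F i = v ∧ F (i+1) ≠ v) with hA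
    set B := (Finset.range m).filter (fun i => F i ≠ v ∧ F (i+1) = v) with hB
    have hIAB : (I v).card = A.card + B.card := by
      rw [← Finset.card_union_of_disjoint (by
        rw [Finset.disjoint_filter]
        intro i _ hia hib
        exact hib.1 hia.1)]
      congr 1
      ext i
      simp only [hI, hA, hB, Finset.mem_filter, Finset.mem_union, Finset.mem_range]
      constructor
      · rintro ⟨hi, hne, h | h⟩
        · exact Or.inl ⟨hi, h, fun hh => hne (h.trans hh.symm)⟩
        · exact Or.inr ⟨hi, fun hh => hne (hh.trans h.symm), h⟩
      · rintro (⟨hi, h1, h2⟩ | ⟨hi, h1, h2⟩)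
        · exact ⟨hi, fun hh => h2 (hh.symm.trans h1), Or.inl h1⟩
        · exact ⟨hi, fun hh => h1 (hh.trans h2), Or.inr h2⟩
    have hAB : A.card = B.card := by
      have ht := Finset.sum_range_sub' (fun i => (if F i = v then (1:ℤ) else 0)) m
      simp only [if_neg h0, if_neg hm, sub_zero, sub_self] at ht
      have hpt : ∀ i ∈ Finset.range m,
          ((if F i = v then (1:ℤ) else 0) - (if F (i+1) = v then (1:ℤ) else 0))
          = (if F i = v ∧ F (i+1) ≠ v then (1:ℤ) else 0)
            - (if F i ≠ v ∧ F (i+1) = v then (1:ℤ) else 0) := by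
        intro i _
        by_cases hx : F i = v <;> by_cases hy : F (i+1) = v <;> simp [hx, hy]
      rw [Finset.sum_congr rfl hpt, Finset.sum_sub_distrib] at ht
      rw [Finset.sum_boole, Finset.sum_boole] at ht
      have : ((A.card : ℤ)) = B.card := by
        have := sub_eq_zero.mp ht
        simpa [hA, hB] using this
      exact_mod_cast this
    refine ⟨B.card, by omega⟩
  have hkey : ∀ v : Fin n, n ≤ (I v).card + (if v = F 0 ∨ v = F m then 1 else 0) := by
    intro v
    by_cases hv : v = F 0 ∨ v = F m
    · rw [if_pos hv]
      have := hlb v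
      omega
    · rw [if_neg hv]
      push_neg at hv
      obtain ⟨c, hc⟩ := hpar v (fun h => hv.1 h.symm) (fun h => hv.2 h.symm)
      obtain ⟨k, hk⟩ := hev
      have := hlb v
      omega
  have hsumkey : n * n ≤ ∑ v : Fin n, ((I v).card + (if v = F 0 ∨ v = F m then 1 else 0)) := by
    calc n * n = ∑ _v : Fin n, n := by simp [Finset.sum_const, mul_comm]
    _ ≤ _ := Finset.sum_le_sum (fun v _ => hkey v)
  rw [Finset.sum_add_distrib, hsum] at hsumkey
  have hind : (∑ v : Fin n, (if v = F 0 ∨ v = F m then 1 else 0)) ≤ 2 := by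
    have hpt : ∀ v : Fin n, (if v = F 0 ∨ v = F m then (1:ℕ) else 0)
        ≤ (if v = F 0 then 1 else 0) + (if v = F m then 1 else 0) := by
      intro v
      by_cases h1 : v = F 0 <;> by_cases h2 : v = F m <;> simp [h1, h2]
    calc (∑ v : Fin n, (if v = F 0 ∨ v = F m then 1 else 0))
        ≤ ∑ v : Fin n, ((if v = F 0 then 1 else 0) + (if v = F m then 1 else 0)) :=
          Finset.sum_le_sum (fun v _ => hpt v)
      _ = 2 := by
          rw [Finset.sum_add_distrib]
          simp [Finset.sum_ite_eq', Finset.mem_univ]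
  omega

section Glue
variable {n : ℕ}

lemma top_dist_le (u v : Fin n) : (⊤ : SimpleGraph (Fin n)).dist u v ≤ 1 := by
  by_cases h : u = v
  · subst h; simp [SimpleGraph.dist_self]
  · have := SimpleGraph.dist_le
      (SimpleGraph.Walk.cons (show (⊤ : SimpleGraph (Fin n)).Adj u v by simpa using h)
        SimpleGraph.Walk.nil)
    simpa using this

lemma top_dist_eq_one {u v : Fin n} (h : u ≠ v) :
    (⊤ : SimpleGraph (Fin n)).dist u v = 1 := by
  refine le_antisymm (top_dist_le u v) ?_
  have hr : (⊤ : SimpleGraph (Fin n)).Reachable u v :=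
    ⟨SimpleGraph.Walk.cons (by simpa using h) SimpleGraph.Walk.nil⟩
  exact hr.pos_dist_of_ne h

lemma mDist_le_one {l : ℕ} (hl : 0 < l) (f g : Fin l → Fin n) :
    mDist (⊤ : SimpleGraph (Fin n)) f g ≤ 1 := by
  unfold mDist
  exact le_trans (Nat.sInf_le ⟨⟨0, hl⟩, rfl⟩) (top_dist_le _ _)

lemma surj_pos (hn : 2 ≤ n) {l : ℕ} {f : Fin l → Fin n} (hs : Function.Surjective f) : 0 < l := by
  obtain ⟨i, -⟩ := hs ⟨0, by omega⟩
  exact i.pos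

/-- Any function with the sweep condition has many "moves". -/
lemma sweep_cov {l : ℕ} {f : Fin l → Fin n} (hl : 0 < l)
    (hsw : ∀ e ∈ (⊤ : SimpleGraph (Fin n)).edgeSet, ∃ i : ℕ, ∃ hi : i + 1 < l,
      e = s(f ⟨i, Nat.lt_of_succ_lt hi⟩, f ⟨i + 1, hi⟩)) :
    ∀ u v : Fin n, u ≠ v → ∃ i, i < l - 1 ∧
      s(u,v) = s((fun j => f ⟨min j (l-1), by omega⟩) i,
                 (fun j => f ⟨min j (l-1), by omega⟩) (i+1)) := by
  intro u v huv
  obtain ⟨i, hi, he⟩ := hsw s(u,v) (by simpa using huv)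
  refine ⟨i, by omega, ?_⟩
  rw [he]
  congr 2 <;> simp only [Fin.mk.injEq] <;> omega

lemma sweep_len_lb (hn : 2 ≤ n) {l : ℕ} {f : Fin l → Fin n}
    (hs : Function.Surjective f)
    (hsw : ∀ e ∈ (⊤ : SimpleGraph (Fin n)).edgeSet, ∃ i : ℕ, ∃ hi : i + 1 < l,
      e = s(f ⟨i, Nat.lt_of_succ_lt hi⟩, f ⟨i + 1, hi⟩)) :
    n.choose 2 + 1 ≤ l ∧ (Even n → n * n ≤ 2 * l) := by
  have hl : 0 < l := surj_pos hn hs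
  set F : ℕ → Fin n := fun j => f ⟨min j (l-1), by omega⟩ with hF
  have hcov := sweep_cov hl hsw
  have hcard : ((Finset.range (l-1)).filter (fun i => F i ≠ F (i+1))).card ≤ l - 1 :=
    le_trans (Finset.card_filter_le _ _) (by simp)
  constructor
  · have := count1 F hcov
    omega
  · intro hev
    have := count2 hn hev F hcov
    omega

lemma opp_len_lb (hn : 2 ≤ n) {l : ℕ} {f g : Fin l → Fin n}
    (hfs : Function.Surjective f)
    (hfsw : ∀ e ∈ (⊤ : SimpleGraph (Fin n)).edgeSet, ∃ i : ℕ, ∃ hi : i + 1 < l,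
      e = s(f ⟨i, Nat.lt_of_succ_lt hi⟩, f ⟨i + 1, hi⟩))
    (hgsw : ∀ e ∈ (⊤ : SimpleGraph (Fin n)).edgeSet, ∃ i : ℕ, ∃ hi : i + 1 < l,
      e = s(g ⟨i, Nat.lt_of_succ_lt hi⟩, g ⟨i + 1, hi⟩))
    (hop : ∀ i : ℕ, ∀ hi : i + 1 < l,
      (f ⟨i, Nat.lt_of_succ_lt hi⟩ ≠ f ⟨i + 1, hi⟩ ↔
        g ⟨i, Nat.lt_of_succ_lt hi⟩ = g ⟨i + 1, hi⟩)) :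
    2 * n.choose 2 + 1 ≤ l ∧ (Even n → n * n ≤ l + 1) := by
  have hl : 0 < l := surj_pos hn hfs
  set F : ℕ → Fin n := fun j => f ⟨min j (l-1), by omega⟩ with hF
  set Gg : ℕ → Fin n := fun j => g ⟨min j (l-1), by omega⟩ with hG
  have hcovF := sweep_cov hl hfsw
  have hcovG := sweep_cov hl hgsw
  have hFi : ∀ (j : ℕ) (hj : j < l), F j = f ⟨j, hj⟩ :=
    fun j hj => congrArg f (Fin.ext (by simp; omega))
  have hGi : ∀ (j : ℕ) (hj : j < l), Gg j = g ⟨j, hj⟩ :=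
    fun j hj => congrArg g (Fin.ext (by simp; omega))
  have hpart : ((Finset.range (l-1)).filter (fun i => F i ≠ F (i+1))).card
      + ((Finset.range (l-1)).filter (fun i => Gg i ≠ Gg (i+1))).card = l - 1 := by
    have hcongr : (Finset.range (l-1)).filter (fun i => Gg i ≠ Gg (i+1))
        = (Finset.range (l-1)).filter (fun i => ¬ (F i ≠ F (i+1))) := by
      apply Finset.filter_congr
      intro i hi
      simp only [Finset.mem_range] at hi
      have hi' : i + 1 < l := by omega
      have h1 := hFi i (by omega)
      have h2 := hFi (i+1) hi'
      have h3 := hGi i (by omega)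
      have h4 := hGi (i+1) hi'
      have h5 := hop i hi'
      rw [h1, h2, h3, h4]
      simp only [not_not]
      constructor
      · intro hne
        by_contra hc
        exact hne (h5.mp hc)
      · intro heq hgeq
        exact (h5.mpr hgeq) heq
    rw [hcongr, Finset.card_filter_add_card_filter_not, Finset.card_range]
  have c1f := count1 F hcovF
  have c1g := count1 Gg hcovG
  refine ⟨by omega, fun hev => ?_⟩
  have c2f := count2 hn hev F hcovF
  have c2g := count2 hn hev Gg hcovG
  omega

end Glue
section Construct
variable {n : ℕ}

/-- the walk as a total function `ℕ → Fin n` -/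
def F0 (n : ℕ) (hn : 2 ≤ n) (L : List ℕ) (i : ℕ) : Fin n :=
  ⟨L.getD i 0 % n, Nat.mod_lt _ (by omega)⟩

variable (hn : 2 ≤ n) (L : List ℕ)

lemma F0_val (hbd : ∀ x ∈ L, x < n) {i : ℕ} (h : i < L.length) :
    (F0 n hn L i : ℕ) = L.getD i 0 := by
  simp only [F0]
  apply Nat.mod_eq_of_lt
  apply hbd
  rw [List.getD_eq_getElem _ _ h]
  exact List.getElem_mem h

lemma hstep0 (hbd : ∀ x ∈ L, x < n) (hch : List.Chain' (· ≠ ·) L) :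
    ∀ i, i + 1 < L.length → F0 n hn L i ≠ F0 n hn L (i+1) := by
  intro i hi heq
  have h1 := F0_val hn L hbd (show i < L.length by omega)
  have h2 := F0_val hn L hbd hi
  have := List.isChain_iff_getElem.mp hch i (by omega)
  apply this
  rw [← List.getD_eq_getElem L 0 (show i < L.length by omega),
    ← List.getD_eq_getElem L 0 hi, ← h1, ← h2, heq]

lemma infix_index {x y : ℕ} (h : [x, y] <:+: L) :
    ∃ i, i + 1 < L.length ∧ L.getD i 0 = x ∧ L.getD (i+1) 0 = y := by
  obtain ⟨s, t, hst⟩ := h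
  subst hst
  refine ⟨s.length, by simp only [List.length_append, List.length_cons, List.length_nil]; omega, ?_, ?_⟩
  · rw [List.append_assoc, List.getD_append_right _ _ _ _ (le_refl _)]
    simp
  · rw [List.append_assoc, List.getD_append_right _ _ _ _ (by omega)]
    simp

lemma cov0 (hbd : ∀ x ∈ L, x < n)
    (hcov : ∀ u v, u < v → v < n → [u,v] <:+: L ∨ [v,u] <:+: L) :
    ∀ u v : Fin n, u ≠ v → ∃ k, k + 1 < L.length ∧
      s(u, v) = s(F0 n hn L k, F0 n hn L (k+1)) := by
  have key : ∀ u v : Fin n, (u : ℕ) < (v : ℕ) → ∃ k, k + 1 < L.length ∧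
      s(u, v) = s(F0 n hn L k, F0 n hn L (k+1)) := by
    intro u v huv
    rcases hcov u v huv v.isLt with h | h
    · obtain ⟨i, hi, h1, h2⟩ := infix_index L h
      refine ⟨i, hi, ?_⟩
      have e1 : F0 n hn L i = u := Fin.ext (by rw [F0_val hn L hbd (by omega)]; exact h1)
      have e2 : F0 n hn L (i+1) = v := Fin.ext (by rw [F0_val hn L hbd hi]; exact h2)
      rw [e1, e2]
    · obtain ⟨i, hi, h1, h2⟩ := infix_index L h
      refine ⟨i, hi, ?_⟩
      have e1 : F0 n hn L i = v := Fin.ext (by rw [F0_val hn L hbd (by omega)]; exact h1)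
      have e2 : F0 n hn L (i+1) = u := Fin.ext (by rw [F0_val hn L hbd hi]; exact h2)
      rw [e1, e2, Sym2.eq_swap]
  intro u v huv
  rcases lt_or_gt_of_ne (fun h : (u:ℕ) = (v:ℕ) => huv (Fin.ext h)) with h | h
  · exact key u v h
  · obtain ⟨k, hk, he⟩ := key v u h
    exact ⟨k, hk, by rw [Sym2.eq_swap] at he; exact he⟩

lemma mem0 (hbd : ∀ x ∈ L, x < n)
    (hcov : ∀ u v, u < v → v < n → [u,v] <:+: L ∨ [v,u] <:+: L) :
    ∀ v : Fin n, ∃ k, k < L.length ∧ F0 n hn L k = v := by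
  intro v
  have hex : ∃ w : Fin n, w ≠ v := by
    by_cases h : v = ⟨0, by omega⟩
    · exact ⟨⟨1, by omega⟩, by rw [h]; intro hh; simpa using congrArg Fin.val hh⟩
    · exact ⟨⟨0, by omega⟩, fun hh => h hh.symm⟩
  obtain ⟨w, hw⟩ := hex
  obtain ⟨k, hk, he⟩ := cov0 hn L hbd hcov w v hw
  rw [Sym2.eq_iff] at he
  rcases he with ⟨h1, h2⟩ | ⟨h1, h2⟩
  · exact ⟨k+1, hk, h2.symm⟩
  · exact ⟨k, by omega, h2.symm⟩

lemma fin_ne_add_one [NeZero n] (hn : 2 ≤ n) (x : Fin n) : x ≠ x + 1 := by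
  intro h
  have hv := congrArg Fin.val h
  rw [Fin.val_add, Fin.val_one'] at hv
  rw [Nat.mod_eq_of_lt (show (1:ℕ) < n by omega)] at hv
  rcases Nat.lt_or_ge (x.val + 1) n with hlt | hge
  · rw [Nat.mod_eq_of_lt hlt] at hv; omega
  · have hx := x.isLt
    have hxn : x.val + 1 = n := by omega
    rw [hxn, Nat.mod_self] at hv
    omega

lemma mDist_eq_one {l : ℕ} (hl : 0 < l) (f g : Fin l → Fin n)
    (h : ∀ i, f i ≠ g i) : mDist (⊤ : SimpleGraph (Fin n)) f g = 1 := by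
  unfold mDist
  refine le_antisymm (le_trans (Nat.sInf_le ⟨⟨0, hl⟩, rfl⟩) (top_dist_le _ _)) ?_
  refine le_csInf ⟨_, ⟨⟨0, hl⟩, rfl⟩⟩ ?_
  rintro d ⟨i, rfl⟩
  exact le_of_eq (top_dist_eq_one (h i)).symm

lemma construct_pair (hn : 2 ≤ n) (L : List ℕ) (hbd : ∀ x ∈ L, x < n)
    (hch : List.Chain' (· ≠ ·) L)
    (hcov : ∀ u v, u < v → v < n → [u,v] <:+: L ∨ [v,u] <:+: L)
    (hl : 0 < L.length) :
    ∃ f g : Fin L.length → Fin n,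
      IsSweep (⊤ : SimpleGraph (Fin n)) f ∧ IsSweep (⊤ : SimpleGraph (Fin n)) g ∧
      mDist (⊤ : SimpleGraph (Fin n)) f g = 1 := by
  haveI : NeZero n := ⟨by omega⟩
  have hstep := hstep0 hn L hbd hch
  refine ⟨fun i => F0 n hn L i.val, fun i => F0 n hn L i.val + 1,
    ⟨⟨?_, ?_⟩, ?_⟩, ⟨⟨?_, ?_⟩, ?_⟩, ?_⟩
  · intro v
    obtain ⟨k, hk, he⟩ := mem0 hn L hbd hcov v
    exact ⟨⟨k, hk⟩, he⟩
  · intro i hi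
    simpa using hstep i hi
  · intro e he
    induction e with
    | _ u v =>
      rw [SimpleGraph.mem_edgeSet, SimpleGraph.top_adj] at he
      obtain ⟨k, hk, he'⟩ := cov0 hn L hbd hcov u v he
      exact ⟨k, hk, he'⟩
  · intro v
    obtain ⟨k, hk, he⟩ := mem0 hn L hbd hcov (v - 1)
    exact ⟨⟨k, hk⟩, by show F0 n hn L k + 1 = v; rw [he, sub_add_cancel]⟩
  · intro i hi
    simp only [SimpleGraph.top_adj]
    intro h
    exact hstep i hi (add_right_cancel h)
  · intro e he
    induction e with
    | _ u v =>
      rw [SimpleGraph.mem_edgeSet, SimpleGraph.top_adj] at he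
      have huv : u - 1 ≠ v - 1 := by
        intro h
        apply he
        have := congrArg (· + (1 : Fin n)) h
        simpa [sub_add_cancel] using this
      obtain ⟨k, hk, he'⟩ := cov0 hn L hbd hcov _ _ huv
      refine ⟨k, hk, ?_⟩
      rw [Sym2.eq_iff] at he'
      rcases he' with ⟨h1, h2⟩ | ⟨h1, h2⟩
      · rw [show u = F0 n hn L k + 1 from by rw [← h1, sub_add_cancel],
          show v = F0 n hn L (k+1) + 1 from by rw [← h2, sub_add_cancel]]
      · rw [show u = F0 n hn L (k+1) + 1 from by rw [← h1, sub_add_cancel],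
          show v = F0 n hn L k + 1 from by rw [← h2, sub_add_cancel], Sym2.eq_swap]
  · exact mDist_eq_one hl _ _ (fun i => fin_ne_add_one hn _)

end Construct

section Cart
variable {n : ℕ}

lemma fin_ne_add_two [NeZero n] (hn3 : 3 ≤ n) (x : Fin n) : x ≠ x + 1 + 1 := by
  intro h
  have hv := congrArg Fin.val h
  rw [Fin.val_add, Fin.val_add, Fin.val_one',
    Nat.mod_eq_of_lt (show (1:ℕ) < n by omega)] at hv
  have hx := x.isLt
  rcases Nat.lt_or_ge (x.val + 1) n with h1 | h1
  · rw [Nat.mod_eq_of_lt h1] at hv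
    rcases Nat.lt_or_ge (x.val + 1 + 1) n with h2 | h2
    · rw [Nat.mod_eq_of_lt h2] at hv; omega
    · have he : x.val + 1 + 1 = n := by omega
      rw [he, Nat.mod_self] at hv; omega
  · have he : x.val + 1 = n := by omega
    rw [he, Nat.mod_self, Nat.zero_add,
      Nat.mod_eq_of_lt (show (1:ℕ) < n by omega)] at hv
    omega

lemma sym2_shift [NeZero n] (u v x y : Fin n)
    (h : s(u - 1, v - 1) = s(x, y)) : s(u, v) = s(x + 1, y + 1) := by
  rw [Sym2.eq_iff] at h
  rcases h with ⟨h1, h2⟩ | ⟨h1, h2⟩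
  · rw [show u = x + 1 from by rw [← h1, sub_add_cancel],
      show v = y + 1 from by rw [← h2, sub_add_cancel]]
  · rw [show u = y + 1 from by rw [← h1, sub_add_cancel],
      show v = x + 1 from by rw [← h2, sub_add_cancel], Sym2.eq_swap]

/-- first lazy walk of the cartesian construction -/
def cartA (hn : 2 ≤ n) (L : List ℕ) : ℕ → Fin n :=
  haveI : NeZero n := ⟨by omega⟩
  fun i => if i % 2 = 0 then F0 n hn L (i/2)
    else (if F0 n hn L (i/2+1) = F0 n hn L (i/2) + 1 then F0 n hn L (i/2)
      else F0 n hn L (i/2+1))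

/-- second lazy walk of the cartesian construction -/
def cartB (hn : 2 ≤ n) (L : List ℕ) : ℕ → Fin n :=
  haveI : NeZero n := ⟨by omega⟩
  fun i => if i % 2 = 0 then F0 n hn L (i/2) + 1
    else (if F0 n hn L (i/2+1) = F0 n hn L (i/2) + 1 then F0 n hn L (i/2+1) + 1
      else F0 n hn L (i/2) + 1)

lemma cartA_even [NeZero n] (hn : 2 ≤ n) (L : List ℕ) (k : ℕ) :
    cartA hn L (2*k) = F0 n hn L k := by
  have h1 : (2*k) % 2 = 0 := by omega
  have h2 : (2*k)/2 = k := by omega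
  simp only [cartA]
  rw [h1, h2]
  simp

lemma cartA_even' [NeZero n] (hn : 2 ≤ n) (L : List ℕ) (k : ℕ) :
    cartA hn L (2*k+2) = F0 n hn L (k+1) := by
  have := cartA_even hn L (k+1)
  rwa [show 2*(k+1) = 2*k+2 by ring] at this

lemma cartA_odd [NeZero n] (hn : 2 ≤ n) (L : List ℕ) (k : ℕ) :
    cartA hn L (2*k+1) = (if F0 n hn L (k+1) = F0 n hn L k + 1 then F0 n hn L k
      else F0 n hn L (k+1)) := by
  have h1 : (2*k+1) % 2 = 1 := by omega
  have h2 : (2*k+1)/2 = k := by omega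
  simp only [cartA]
  rw [h1, h2]
  simp

lemma cartB_even [NeZero n] (hn : 2 ≤ n) (L : List ℕ) (k : ℕ) :
    cartB hn L (2*k) = F0 n hn L k + 1 := by
  have h1 : (2*k) % 2 = 0 := by omega
  have h2 : (2*k)/2 = k := by omega
  simp only [cartB]
  rw [h1, h2]
  simp

lemma cartB_even' [NeZero n] (hn : 2 ≤ n) (L : List ℕ) (k : ℕ) :
    cartB hn L (2*k+2) = F0 n hn L (k+1) + 1 := by
  have := cartB_even hn L (k+1)
  rwa [show 2*(k+1) = 2*k+2 by ring] at this

lemma cartB_odd [NeZero n] (hn : 2 ≤ n) (L : List ℕ) (k : ℕ) :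
    cartB hn L (2*k+1) = (if F0 n hn L (k+1) = F0 n hn L k + 1 then F0 n hn L (k+1) + 1
      else F0 n hn L k + 1) := by
  have h1 : (2*k+1) % 2 = 1 := by omega
  have h2 : (2*k+1)/2 = k := by omega
  simp only [cartB]
  rw [h1, h2]
  simp


lemma construct_opp (hn3 : 3 ≤ n) (L : List ℕ) (hbd : ∀ x ∈ L, x < n)
    (hch : List.Chain' (· ≠ ·) L)
    (hcov : ∀ u v, u < v → v < n → [u,v] <:+: L ∨ [v,u] <:+: L)
    (hl : 0 < L.length) :
    ∃ f g : Fin (2 * L.length - 1) → Fin n,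
      IsLazySweep (⊤ : SimpleGraph (Fin n)) f ∧ IsLazySweep (⊤ : SimpleGraph (Fin n)) g ∧
      IsOpposite (⊤ : SimpleGraph (Fin n)) f g ∧
      mDist (⊤ : SimpleGraph (Fin n)) f g = 1 := by
  haveI : NeZero n := ⟨by omega⟩
  have hn : 2 ≤ n := by omega
  have hstep := hstep0 hn L hbd hch
  refine ⟨fun i => cartA hn L i.val, fun i => cartB hn L i.val,
    ⟨⟨?_, ?_⟩, ?_⟩, ⟨⟨?_, ?_⟩, ?_⟩, ?_, ?_⟩
  · -- surjectivity of A
    intro v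
    obtain ⟨k, hk, he⟩ := mem0 hn L hbd hcov v
    refine ⟨⟨2*k, by omega⟩, ?_⟩
    show cartA hn L (2*k) = v
    rw [cartA_even hn L k]
    exact he
  · -- lazy track A
    intro i hi
    show (⊤ : SimpleGraph (Fin n)).Adj (cartA hn L i) (cartA hn L (i+1)) ∨
      cartA hn L i = cartA hn L (i+1)
    rcases Nat.even_or_odd i with ⟨k, hk⟩ | ⟨k, hk⟩
    · have hik : i = 2*k := by omega
      subst hik
      have hk1 : k + 1 < L.length := by omega
      rw [cartA_even hn L k, cartA_odd hn L k]
      by_cases hbr : F0 n hn L (k+1) = F0 n hn L k + 1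
      · rw [if_pos hbr]; exact Or.inr rfl
      · rw [if_neg hbr]
        exact Or.inl (by simp only [SimpleGraph.top_adj]; exact hstep k hk1)
    · have hik : i = 2*k+1 := by omega
      subst hik
      have hk1 : k + 1 < L.length := by omega
      rw [show (2*k+1)+1 = 2*k+2 from rfl, cartA_odd hn L k, cartA_even' hn L k]
      by_cases hbr : F0 n hn L (k+1) = F0 n hn L k + 1
      · rw [if_pos hbr]
        exact Or.inl (by simp only [SimpleGraph.top_adj]; exact hstep k hk1)
      · rw [if_neg hbr]; exact Or.inr rfl
  · -- sweep cond A
    intro e he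
    induction e with
    | _ u v =>
      rw [SimpleGraph.mem_edgeSet, SimpleGraph.top_adj] at he
      obtain ⟨k, hk, he'⟩ := cov0 hn L hbd hcov u v he
      by_cases hbr : F0 n hn L (k+1) = F0 n hn L k + 1
      · refine ⟨2*k+1, by omega, ?_⟩
        show s(u, v) = s(cartA hn L (2*k+1), cartA hn L (2*k+1+1))
        rw [show (2*k+1)+1 = 2*k+2 from rfl, cartA_odd hn L k, cartA_even' hn L k,
          if_pos hbr]
        exact he'
      · refine ⟨2*k, by omega, ?_⟩
        show s(u, v) = s(cartA hn L (2*k), cartA hn L (2*k+1))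
        rw [cartA_even hn L k, cartA_odd hn L k, if_neg hbr]
        exact he'
  · -- surjectivity of B
    intro v
    obtain ⟨k, hk, he⟩ := mem0 hn L hbd hcov (v - 1)
    refine ⟨⟨2*k, by omega⟩, ?_⟩
    show cartB hn L (2*k) = v
    rw [cartB_even hn L k, he, sub_add_cancel]
  · -- lazy track B
    intro i hi
    show (⊤ : SimpleGraph (Fin n)).Adj (cartB hn L i) (cartB hn L (i+1)) ∨
      cartB hn L i = cartB hn L (i+1)
    rcases Nat.even_or_odd i with ⟨k, hk⟩ | ⟨k, hk⟩
    · have hik : i = 2*k := by omega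
      subst hik
      have hk1 : k + 1 < L.length := by omega
      rw [cartB_even hn L k, cartB_odd hn L k]
      by_cases hbr : F0 n hn L (k+1) = F0 n hn L k + 1
      · rw [if_pos hbr]
        refine Or.inl (by simp only [SimpleGraph.top_adj]; intro h; exact hstep k hk1 (add_right_cancel h))
      · rw [if_neg hbr]; exact Or.inr rfl
    · have hik : i = 2*k+1 := by omega
      subst hik
      have hk1 : k + 1 < L.length := by omega
      rw [show (2*k+1)+1 = 2*k+2 from rfl, cartB_odd hn L k, cartB_even' hn L k]
      by_cases hbr : F0 n hn L (k+1) = F0 n hn L k + 1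
      · rw [if_pos hbr]; exact Or.inr rfl
      · rw [if_neg hbr]
        refine Or.inl (by simp only [SimpleGraph.top_adj]; intro h; exact hstep k hk1 (add_right_cancel h))
  · -- sweep cond B
    intro e he
    induction e with
    | _ u v =>
      rw [SimpleGraph.mem_edgeSet, SimpleGraph.top_adj] at he
      have huv : u - 1 ≠ v - 1 := by
        intro h
        apply he
        have := congrArg (· + (1 : Fin n)) h
        simpa [sub_add_cancel] using this
      obtain ⟨k, hk, he'⟩ := cov0 hn L hbd hcov _ _ huv
      have hsv := sym2_shift u v _ _ he'
      by_cases hbr : F0 n hn L (k+1) = F0 n hn L k + 1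
      · refine ⟨2*k, by omega, ?_⟩
        show s(u, v) = s(cartB hn L (2*k), cartB hn L (2*k+1))
        rw [cartB_even hn L k, cartB_odd hn L k, if_pos hbr]
        exact hsv
      · refine ⟨2*k+1, by omega, ?_⟩
        show s(u, v) = s(cartB hn L (2*k+1), cartB hn L (2*k+1+1))
        rw [show (2*k+1)+1 = 2*k+2 from rfl, cartB_odd hn L k, cartB_even' hn L k,
          if_neg hbr]
        exact hsv
  · -- opposite
    intro i hi
    show ((⊤ : SimpleGraph (Fin n)).Adj (cartA hn L i) (cartA hn L (i+1)) ↔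
      cartB hn L i = cartB hn L (i+1))
    rcases Nat.even_or_odd i with ⟨k, hk⟩ | ⟨k, hk⟩
    · have hik : i = 2*k := by omega
      subst hik
      have hk1 : k + 1 < L.length := by omega
      rw [cartA_even hn L k, cartA_odd hn L k, cartB_even hn L k, cartB_odd hn L k]
      by_cases hbr : F0 n hn L (k+1) = F0 n hn L k + 1
      · rw [if_pos hbr, if_pos hbr]
        exact iff_of_false (fun h => h.ne rfl)
          (fun h => hstep k hk1 (add_right_cancel h))
      · rw [if_neg hbr, if_neg hbr]
        exact iff_of_true (by simp only [SimpleGraph.top_adj]; exact hstep k hk1) rfl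
    · have hik : i = 2*k+1 := by omega
      subst hik
      have hk1 : k + 1 < L.length := by omega
      rw [show (2*k+1)+1 = 2*k+2 from rfl, cartA_odd hn L k, cartA_even' hn L k,
        cartB_odd hn L k, cartB_even' hn L k]
      by_cases hbr : F0 n hn L (k+1) = F0 n hn L k + 1
      · rw [if_pos hbr, if_pos hbr]
        exact iff_of_true (by simp only [SimpleGraph.top_adj]; exact hstep k hk1) rfl
      · rw [if_neg hbr, if_neg hbr]
        exact iff_of_false (fun h => h.ne rfl)
          (fun h => hstep k hk1 (add_right_cancel h))
  · -- mDist
    refine mDist_eq_one (by omega) _ _ ?_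
    intro i
    show cartA hn L i.val ≠ cartB hn L i.val
    rcases Nat.even_or_odd i.val with ⟨k, hk⟩ | ⟨k, hk⟩
    · rw [show (i : ℕ) = 2*k from by omega, cartA_even hn L k, cartB_even hn L k]
      exact fin_ne_add_one hn _
    · rw [show (i : ℕ) = 2*k+1 from by omega, cartA_odd hn L k, cartB_odd hn L k]
      by_cases hbr : F0 n hn L (k+1) = F0 n hn L k + 1
      · rw [if_pos hbr, if_pos hbr, hbr]
        exact fin_ne_add_two hn3 _
      · rw [if_neg hbr, if_neg hbr]
        intro h
        exact hbr (by rw [h])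

end Cart

end SpanAux

namespace SpanAux

lemma construct_opp2 :
    ∃ f g : Fin 3 → Fin 2,
      IsLazySweep (⊤ : SimpleGraph (Fin 2)) f ∧ IsLazySweep (⊤ : SimpleGraph (Fin 2)) g ∧
      IsOpposite (⊤ : SimpleGraph (Fin 2)) f g := by
  have hsym : ∀ u v : Fin 2, u ≠ v → s(u,v) = s((0:Fin 2), (1:Fin 2)) := by decide
  refine ⟨fun i => if i.val = 0 then 0 else 1, fun i => if i.val = 2 then 0 else 1,
    ⟨⟨?_, ?_⟩, ?_⟩, ⟨⟨?_, ?_⟩, ?_⟩, ?_⟩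
  · intro v
    by_cases h : v = 0
    · exact ⟨⟨0, by omega⟩, by simp [h]⟩
    · refine ⟨⟨1, by omega⟩, ?_⟩
      have hv : v = 1 := by fin_cases v <;> simp_all
      simp [hv]
  · intro i hi
    have hi2 : i < 2 := by omega
    interval_cases i
    · exact Or.inl (show (⊤ : SimpleGraph (Fin 2)).Adj 0 1 by simp)
    · exact Or.inr (show (1:Fin 2) = 1 from rfl)
  · intro e he
    induction e with
    | _ u v =>
      rw [SimpleGraph.mem_edgeSet, SimpleGraph.top_adj] at he
      rw [hsym u v he]
      exact ⟨0, by omega, show s((0:Fin 2),(1:Fin 2)) = s((0:Fin 2),(1:Fin 2)) from rfl⟩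
  · intro v
    by_cases h : v = 0
    · exact ⟨⟨2, by omega⟩, by simp [h]⟩
    · refine ⟨⟨0, by omega⟩, ?_⟩
      have hv : v = 1 := by fin_cases v <;> simp_all
      simp [hv]
  · intro i hi
    have hi2 : i < 2 := by omega
    interval_cases i
    · exact Or.inr (show (1:Fin 2) = 1 from rfl)
    · exact Or.inl (show (⊤ : SimpleGraph (Fin 2)).Adj 1 0 by simp)
  · intro e he
    induction e with
    | _ u v =>
      rw [SimpleGraph.mem_edgeSet, SimpleGraph.top_adj] at he
      rw [hsym u v he]
      exact ⟨1, by omega, show s((0:Fin 2),(1:Fin 2)) = s((1:Fin 2),(0:Fin 2)) by decide⟩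
  · intro i hi
    have hi2 : i < 2 := by omega
    interval_cases i
    · exact iff_of_true (show (⊤ : SimpleGraph (Fin 2)).Adj 0 1 by simp)
        (show (1:Fin 2) = 1 from rfl)
    · exact iff_of_false (show ¬ (⊤ : SimpleGraph (Fin 2)).Adj 1 1 by simp)
        (show ¬ (1:Fin 2) = 0 by decide)

lemma cart2_mdist_zero {l : ℕ} (f g : Fin l → Fin 2)
    (hf : IsLazySweep (⊤ : SimpleGraph (Fin 2)) f)
    (hg : IsLazySweep (⊤ : SimpleGraph (Fin 2)) g)
    (hop : IsOpposite (⊤ : SimpleGraph (Fin 2)) f g) :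
    mDist (⊤ : SimpleGraph (Fin 2)) f g = 0 := by
  have hl2 : 2 ≤ l := by
    obtain ⟨a, ha⟩ := hf.1.1 0
    obtain ⟨b, hb⟩ := hf.1.1 1
    have hab : (a : ℕ) ≠ (b : ℕ) := by
      intro h
      rw [Fin.ext h, hb] at ha
      exact absurd ha (by decide)
    have h1 := a.isLt
    have h2 := b.isLt
    omega
  have hex : ∃ i : Fin l, f i = g i := by
    by_contra hc
    push_neg at hc
    have h0 : (0:ℕ) + 1 < l := by omega
    have key := hop 0 h0
    rw [SimpleGraph.top_adj] at key
    have hfg : ∀ x y : Fin 2, x ≠ y → y = x + 1 := by decide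
    set i0 : Fin l := ⟨0, Nat.lt_of_succ_lt h0⟩
    set i1 : Fin l := ⟨0+1, h0⟩
    by_cases hmv : f i0 = f i1
    · have hgne : g i0 ≠ g i1 := fun h => (key.mpr h) hmv
      have h1 : g i1 = g i0 + 1 := hfg _ _ hgne
      have h2 : g i0 = f i0 + 1 := hfg _ _ (hc i0)
      apply hc i1
      rw [h1, h2, show ∀ x : Fin 2, x + 1 + 1 = x from by decide]
      exact hmv.symm
    · have hgeq : g i0 = g i1 := key.mp hmv
      have h1 : f i1 = f i0 + 1 := hfg _ _ hmv
      have h2 : g i0 = f i0 + 1 := hfg _ _ (hc i0)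
      apply hc i1
      rw [h1, ← hgeq, h2]
  obtain ⟨i, hi⟩ := hex
  unfold mDist
  have hd : (⊤ : SimpleGraph (Fin 2)).dist (f i) (g i) = 0 := by
    rw [hi, SimpleGraph.dist_self]
  exact Nat.eq_zero_of_le_zero (le_trans (Nat.sInf_le ⟨i, rfl⟩) (le_of_eq hd))

lemma Tpos {n : ℕ} (hn : 2 ≤ n) :
    0 < (if Odd n then (n^2 - n + 2)/2 else n^2/2) := by
  rcases Nat.even_or_odd n with hev | hodd
  · rw [if_neg (Nat.not_odd_iff_even.mpr hev)]
    obtain ⟨m, hm⟩ := hev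
    have h4 : n^2 = 2*(2*(m*m)) := by rw [show n = 2*m by omega]; ring
    have h5 : 1 ≤ m*m := Nat.mul_pos (by omega) (by omega)
    set a := m*m with ha
    omega
  · rw [if_pos hodd]
    obtain ⟨m, hm⟩ := hodd
    have h4 : n^2 = 4*(m*m)+4*m+1 := by rw [hm]; ring
    set a := m*m with ha
    omega

lemma exists_walk {n : ℕ} (hn : 2 ≤ n) :
    ∃ L : List ℕ, (∀ x ∈ L, x < n) ∧ List.Chain' (· ≠ ·) L ∧
      (∀ u v, u < v → v < n → [u,v] <:+: L ∨ [v,u] <:+: L) ∧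
      L.length = (if Odd n then (n^2 - n + 2)/2 else n^2/2) := by
  rcases Nat.even_or_odd n with hev | hodd
  · obtain ⟨m, hm⟩ := hev
    have hm1 : 1 ≤ m := by omega
    refine ⟨Wev (m-1), ?_, Wev_chain (m-1), ?_, ?_⟩
    · intro x hx
      have := Wev_bound (m-1) x hx
      omega
    · intro u v h1 h2
      exact Wev_cov (m-1) u v h1 (by omega)
    · rw [Wev_length, if_neg (Nat.not_odd_iff_even.mpr ⟨m, hm⟩)]
      have h3 : (m-1)+1 = m := by omega
      rw [h3]
      have h4 : n^2 = 2*(2*(m*m)) := by rw [show n = 2*m by omega]; ring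
      rw [h4, Nat.mul_div_cancel_left _ (by omega), pow_two]
  · obtain ⟨m, hm⟩ := hodd
    refine ⟨Eul m, ?_, Eul_chain m, ?_, ?_⟩
    · intro x hx
      have := Eul_bound m x hx
      omega
    · intro u v h1 h2
      exact Eul_cov m u v h1 (by omega)
    · rw [Eul_length, if_pos ⟨m, hm⟩]
      have h4 : n^2 = 4*(m*m)+4*m+1 := by rw [hm]; ring
      have h5 : m*(2*m+1) = 2*(m*m)+m := by ring
      rw [h4, h5, hm]
      set a := m*m with ha
      omega

lemma choose_odd {n m : ℕ} (hm : n = 2*m+1) : n.choose 2 = 2*(m*m)+m := by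
  rw [Nat.choose_two_right, show n - 1 = 2*m by omega,
    show n * (2*m) = (2*(m*m)+m)*2 by rw [hm]; ring]
  exact Nat.mul_div_cancel _ (by omega)

theorem main_calc (n : ℕ) (hn : 2 ≤ n)
    (hopp : ∃ (l : ℕ) (f g : Fin l → Fin n),
      IsLazySweep (⊤ : SimpleGraph (Fin n)) f ∧ IsLazySweep (⊤ : SimpleGraph (Fin n)) g ∧
      IsOpposite (⊤ : SimpleGraph (Fin n)) f g ∧
      mDist (⊤ : SimpleGraph (Fin n)) f g = cartesianEdgeSpan (⊤ : SimpleGraph (Fin n)) ∧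
      l = 2 * (if Odd n then (n^2 - n + 2)/2 else n^2/2) - 1) :
    strongEdgeL (⊤ : SimpleGraph (Fin n)) = (if Odd n then (n ^ 2 - n + 2) / 2 else n ^ 2 / 2) ∧
      directEdgeL (⊤ : SimpleGraph (Fin n)) = (if Odd n then (n ^ 2 - n + 2) / 2 else n ^ 2 / 2) ∧
      cartesianEdgeL (⊤ : SimpleGraph (Fin n)) = (if Odd n then n ^ 2 - n + 1 else n ^ 2 - 1) := by
  classical
  obtain ⟨L, hbd, hch, hcov, hlen⟩ := exists_walk hn
  have hl0 : 0 < L.length := by rw [hlen]; exact Tpos hn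
  obtain ⟨f, g, hf, hg, hmd⟩ := construct_pair hn L hbd hch hcov hl0
  obtain ⟨lc, fc, gc, hfc, hgc, hoc, hmc, hlc⟩ := hopp
  have sweep_lazy : ∀ {l : ℕ} {f' : Fin l → Fin n},
      IsSweep (⊤ : SimpleGraph (Fin n)) f' → IsLazySweep (⊤ : SimpleGraph (Fin n)) f' :=
    fun hf' => ⟨⟨hf'.1.1, fun i hi => Or.inl (hf'.1.2 i hi)⟩, hf'.2⟩
  have hub : ∀ {l : ℕ} (f' g' : Fin l → Fin n), Function.Surjective f' →
      mDist (⊤ : SimpleGraph (Fin n)) f' g' ≤ 1 :=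
    fun f' g' hs => mDist_le_one (surj_pos hn hs) _ _
  have hkeyT : ∀ l : ℕ, n.choose 2 + 1 ≤ l → (Even n → n * n ≤ 2 * l) →
      (if Odd n then (n^2 - n + 2)/2 else n^2/2) ≤ l := by
    intro l h1 h2
    rcases Nat.even_or_odd n with hev | hodd
    · rw [if_neg (Nat.not_odd_iff_even.mpr hev)]
      obtain ⟨m, hm⟩ := hev
      have h6 := h2 ⟨m, hm⟩
      have h4 : n^2 = 2*(2*(m*m)) := by rw [show n = 2*m by omega]; ring
      have h5 : n*n = 2*(2*(m*m)) := by rw [show n = 2*m by omega]; ring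
      rw [h5] at h6
      rw [h4]
      set a := m*m with ha
      omega
    · rw [if_pos hodd]
      obtain ⟨m, hm⟩ := hodd
      rw [choose_odd hm] at h1
      have h4 : n^2 = 4*(m*m)+4*m+1 := by rw [hm]; ring
      rw [h4, hm]
      set a := m*m with ha
      omega
  have hkeyTC : ∀ l : ℕ, 2 * n.choose 2 + 1 ≤ l → (Even n → n * n ≤ l + 1) →
      (if Odd n then n^2 - n + 1 else n^2 - 1) ≤ l := by
    intro l h1 h2
    rcases Nat.even_or_odd n with hev | hodd
    · rw [if_neg (Nat.not_odd_iff_even.mpr hev)]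
      obtain ⟨m, hm⟩ := hev
      have h6 := h2 ⟨m, hm⟩
      have h5 : n*n = 2*(2*(m*m)) := by rw [show n = 2*m by omega]; ring
      have h4 : n^2 = 2*(2*(m*m)) := by rw [show n = 2*m by omega]; ring
      rw [h5] at h6
      rw [h4]
      set a := m*m with ha
      omega
    · rw [if_pos hodd]
      obtain ⟨m, hm⟩ := hodd
      rw [choose_odd hm] at h1
      have h4 : n^2 = 4*(m*m)+4*m+1 := by rw [hm]; ring
      rw [h4, hm]
      set a := m*m with ha
      omega
  have hTC : 2 * (if Odd n then (n^2 - n + 2)/2 else n^2/2) - 1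
      = (if Odd n then n^2 - n + 1 else n^2 - 1) := by
    rcases Nat.even_or_odd n with hev | hodd
    · rw [if_neg (Nat.not_odd_iff_even.mpr hev), if_neg (Nat.not_odd_iff_even.mpr hev)]
      obtain ⟨m, hm⟩ := hev
      have h4 : n^2 = 2*(2*(m*m)) := by rw [show n = 2*m by omega]; ring
      rw [h4]
      set a := m*m with ha
      omega
    · rw [if_pos hodd, if_pos hodd]
      obtain ⟨m, hm⟩ := hodd
      have h4 : n^2 = 4*(m*m)+4*m+1 := by rw [hm]; ring
      rw [h4, hm]
      set a := m*m with ha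
      omega
  have hspanS : strongEdgeSpan (⊤ : SimpleGraph (Fin n)) = 1 := by
    apply le_antisymm
    · apply csSup_le
      · exact ⟨1, L.length, f, g, sweep_lazy hf, sweep_lazy hg, hmd⟩
      · rintro d ⟨l, f', g', hf', hg', rfl⟩
        exact hub f' g' hf'.1.1
    · apply le_csSup
      · refine ⟨1, ?_⟩
        rintro d ⟨l, f', g', hf', hg', rfl⟩
        exact hub f' g' hf'.1.1
      · exact ⟨L.length, f, g, sweep_lazy hf, sweep_lazy hg, hmd⟩
  have hspanD : directEdgeSpan (⊤ : SimpleGraph (Fin n)) = 1 := by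
    apply le_antisymm
    · apply csSup_le
      · exact ⟨1, L.length, f, g, hf, hg, hmd⟩
      · rintro d ⟨l, f', g', hf', hg', rfl⟩
        exact hub f' g' hf'.1.1
    · apply le_csSup
      · refine ⟨1, ?_⟩
        rintro d ⟨l, f', g', hf', hg', rfl⟩
        exact hub f' g' hf'.1.1
      · exact ⟨L.length, f, g, hf, hg, hmd⟩
  refine ⟨?_, ?_, ?_⟩
  · unfold strongEdgeL
    simp only [hspanS]
    apply le_antisymm
    · rw [← hlen]
      exact Nat.sInf_le ⟨f, g, sweep_lazy hf, sweep_lazy hg, hmd⟩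
    · refine le_csInf ⟨L.length, f, g, sweep_lazy hf, sweep_lazy hg, hmd⟩ ?_
      rintro l ⟨f', g', hf', hg', -⟩
      have hlb := sweep_len_lb hn hf'.1.1 hf'.2
      exact hkeyT l hlb.1 hlb.2
  · unfold directEdgeL
    simp only [hspanD]
    apply le_antisymm
    · rw [← hlen]
      exact Nat.sInf_le ⟨f, g, hf, hg, hmd⟩
    · refine le_csInf ⟨L.length, f, g, hf, hg, hmd⟩ ?_
      rintro l ⟨f', g', hf', hg', -⟩
      have hlb := sweep_len_lb hn hf'.1.1 hf'.2
      exact hkeyT l hlb.1 hlb.2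
  · unfold cartesianEdgeL
    apply le_antisymm
    · rw [← hTC, ← hlc]
      exact Nat.sInf_le ⟨fc, gc, hfc, hgc, hoc, hmc⟩
    · refine le_csInf ⟨lc, fc, gc, hfc, hgc, hoc, hmc⟩ ?_
      rintro l ⟨f', g', hf', hg', hop', -⟩
      have hop2 : ∀ (i : ℕ) (hi : i + 1 < l),
          (f' ⟨i, Nat.lt_of_succ_lt hi⟩ ≠ f' ⟨i+1, hi⟩ ↔
            g' ⟨i, Nat.lt_of_succ_lt hi⟩ = g' ⟨i+1, hi⟩) :=
        fun i hi => ((SimpleGraph.top_adj _ _).symm).trans (hop' i hi)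
      have hlb := opp_len_lb hn hf'.1.1 hf'.2 hg'.2 hop2
      exact hkeyTC l hlb.1 hlb.2

end SpanAux

theorem stmt19 (n : ℕ) (hn : 2 ≤ n) :
    strongEdgeL (⊤ : SimpleGraph (Fin n)) =
        (if Odd n then (n ^ 2 - n + 2) / 2 else n ^ 2 / 2) ∧
      directEdgeL (⊤ : SimpleGraph (Fin n)) =
        (if Odd n then (n ^ 2 - n + 2) / 2 else n ^ 2 / 2) ∧
        cartesianEdgeL (⊤ : SimpleGraph (Fin n)) =
          (if Odd n then n ^ 2 - n + 1 else n ^ 2 - 1) := by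
  rcases eq_or_lt_of_le hn with h2 | h3
  · subst h2
    obtain ⟨f2, g2, hf2, hg2, ho2⟩ := SpanAux.construct_opp2
    have hspan0 : cartesianEdgeSpan (⊤ : SimpleGraph (Fin 2)) = 0 := by
      apply Nat.eq_zero_of_le_zero
      apply csSup_le
      · exact ⟨0, 3, f2, g2, hf2, hg2, ho2, SpanAux.cart2_mdist_zero f2 g2 hf2 hg2 ho2⟩
      · rintro d ⟨l, f', g', hf', hg', hop', rfl⟩
        exact le_of_eq (SpanAux.cart2_mdist_zero f' g' hf' hg' hop')
    refine SpanAux.main_calc 2 (by omega) ⟨3, f2, g2, hf2, hg2, ho2, ?_, by decide⟩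
    rw [hspan0]
    exact SpanAux.cart2_mdist_zero f2 g2 hf2 hg2 ho2
  · refine SpanAux.main_calc n hn ?_
    obtain ⟨L, hbd, hch, hcov, hlen⟩ := SpanAux.exists_walk hn
    have hl0 : 0 < L.length := by rw [hlen]; exact SpanAux.Tpos hn
    obtain ⟨fc, gc, hfc, hgc, hoc, hmc⟩ :=
      SpanAux.construct_opp (by omega) L hbd hch hcov hl0
    have hub : ∀ {l : ℕ} (f' g' : Fin l → Fin n), Function.Surjective f' →
        mDist (⊤ : SimpleGraph (Fin n)) f' g' ≤ 1 :=
      fun f' g' hs => SpanAux.mDist_le_one (SpanAux.surj_pos hn hs) _ _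
    have hspanC : cartesianEdgeSpan (⊤ : SimpleGraph (Fin n)) = 1 := by
      apply le_antisymm
      · apply csSup_le
        · exact ⟨1, 2*L.length-1, fc, gc, hfc, hgc, hoc, hmc⟩
        · rintro d ⟨l, f', g', hf', hg', hop', rfl⟩
          exact hub f' g' hf'.1.1
      · refine le_csSup ⟨1, ?_⟩ ⟨2*L.length-1, fc, gc, hfc, hgc, hoc, hmc⟩
        rintro d ⟨l, f', g', hf', hg', hop', rfl⟩
        exact hub f' g' hf'.1.1
    exact ⟨2*L.length - 1, fc, gc, hfc, hgc, hoc, by rw [hspanC]; exact hmc, by rw [hlen]⟩
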